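/- For even n ≥ 4, the polynomial D(CL_n, x) = x^(n-1) + (n-2)x^(n-2) + x has a real root in the half-open interval (−(n−2), −(n−2) + 1/(n−3)^(n−3)]. -/

import Mathlib

theorem CL_n_even_real_root (n : ℕ) (hn : 4 ≤ n) (heven : Even n) :
    ∃ x : ℝ, x ∈ Set.Ioc (-((n : ℝ) - 2)) (-((n : ℝ) - 2) + 1 / ((n : ℝ) - 3) ^ (n - 3)) ∧
      x ^ (n - 1) + ((n : ℝ) - 2) * x ^ (n - 2) + x = 0 := by
  obtain ⟨k, rfl⟩ : ∃ k, n = k + 4 := ⟨n - 4, by omega⟩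
  have hk : Even k := by rcases heven with ⟨r, hr⟩; exact ⟨r - 2, by omega⟩
  have h1 : k + 4 - 1 = k + 3 := by omega
  have h2 : k + 4 - 2 = k + 2 := by omega
  have h3 : k + 4 - 3 = k + 1 := by omega
  rw [h1, h2, h3]
  have hcast : ((k + 4 : ℕ) : ℝ) - 2 = (k : ℝ) + 2 := by push_cast; ring
  have hcast3 : ((k + 4 : ℕ) : ℝ) - 3 = (k : ℝ) + 1 := by push_cast; ring
  rw [hcast, hcast3]
  have hk0 : (0 : ℝ) ≤ (k : ℝ) := Nat.cast_nonneg k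
  set c : ℝ := (k : ℝ) + 2 with hc
  have hcpos : 0 < c := by simp [hc]; linarith
  set K : ℝ := ((k : ℝ) + 1) ^ (k + 1) with hK
  have hKpos : 0 < K := pow_pos (by linarith) _
  have hK1 : 1 ≤ K := by rw [hK]; calc (1:ℝ) = 1 ^ (k+1) := (one_pow _).symm
    _ ≤ ((k:ℝ)+1) ^ (k+1) := pow_le_pow_left₀ zero_le_one (by linarith) _
  set ε : ℝ := 1 / K with hε
  have hεpos : 0 < ε := by positivity
  have hε1 : ε ≤ 1 := by rw [hε]; exact (div_le_one hKpos).2 hK1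
  have hce : (k : ℝ) + 1 ≤ c - ε := by simp only [hc]; linarith
  have hcepos : 0 < c - ε := by linarith
  have he2 : Even (k + 2) := hk.add (by decide)
  have ho3 : Odd (k + 3) := he2.add_one
  set f : ℝ → ℝ := fun x => x ^ (k + 3) + c * x ^ (k + 2) + x with hf
  have hfa : f (-c) = -c := by
    have e1 : (-c) ^ (k + 2) = c ^ (k + 2) := he2.neg_pow c
    have e2 : (-c) ^ (k + 3) = -c ^ (k + 3) := ho3.neg_pow c
    simp only [hf, e1, e2]; ring
  have hfb : 0 ≤ f (-c + ε) := by
    have hrw : -c + ε = -(c - ε) := by ring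
    have e1 : (-(c - ε)) ^ (k + 2) = (c - ε) ^ (k + 2) := he2.neg_pow _
    have e2 : (-(c - ε)) ^ (k + 3) = -(c - ε) ^ (k + 3) := ho3.neg_pow _
    have key : K ≤ (c - ε) ^ (k + 1) := by
      rw [hK]; exact pow_le_pow_left₀ (by linarith) hce _
    have key2 : 1 ≤ (c - ε) ^ (k + 1) * ε := by
      have : K * ε ≤ (c - ε) ^ (k + 1) * ε :=
        mul_le_mul_of_nonneg_right key hεpos.le
      have hKε : K * ε = 1 := by rw [hε, mul_one_div, div_self hKpos.ne']
      linarith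
    have key3 : c - ε ≤ (c - ε) ^ (k + 2) * ε := by
      have : (c - ε) * 1 ≤ (c - ε) * ((c - ε) ^ (k + 1) * ε) :=
        mul_le_mul_of_nonneg_left key2 hcepos.le
      calc c - ε = (c - ε) * 1 := by ring
        _ ≤ (c - ε) * ((c - ε) ^ (k + 1) * ε) := this
        _ = (c - ε) ^ (k + 2) * ε := by rw [pow_succ]; ring
    have : f (-c + ε) = (c - ε) ^ (k + 2) * ε - (c - ε) := by
      rw [hrw]; simp only [hf, e1, e2]
      rw [pow_succ]; ring
    linarith [key3, this.ge]
  have hab : -c ≤ -c + ε := by linarith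
  have hcont : ContinuousOn f (Set.Icc (-c) (-c + ε)) := by
    apply Continuous.continuousOn; fun_prop
  have hsub := intermediate_value_Ioc hab hcont
  have h0 : (0 : ℝ) ∈ Set.Ioc (f (-c)) (f (-c + ε)) := ⟨by rw [hfa]; linarith, hfb⟩
  obtain ⟨x, hx, hfx⟩ := hsub h0
  exact ⟨x, hx, hfx⟩
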